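/- For every natural number n, there is an order-independent randomized online matroid morphism from the class of binary matroids with at most n elements into the complete binary matroid of rank n. That is, one can assign to every m ≤ n and every binary matroid M on Fin m (with ground set all of Fin m) a finitely supported probability distribution μ_M on maps Fin m → (Fin n → ZMod 2) such that: (i) every map in the support of μ_M is rank-preserving into the complete binary matroid of rank n; (ii) for every k-prefix M' of M, the pushforward of μ_M under restriction to Fin k equals μ_{M'}; and (iii) for every permutation σ of Fin m, writing M^σ for the matroid on Fin m in which a set S is independent iff σ(S) is independent in M, the pushforward of μ_{M^σ} under f ↦ f ∘ σ⁻¹ equals μ_M. -/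

import Mathlib

open Set

/-- The rank of a set in a matroid: the supremum of the cardinalities of its
independent subsets. -/
noncomputable def mRank {α : Type*} (M : Matroid α) (S : Set α) : ℕ∞ :=
  ⨆ I ∈ {I : Set α | M.Indep I ∧ I ⊆ S}, I.encard

/-- The rank of a set of vectors: the dimension of its linear span. -/
noncomputable def spanRank (K : Type*) [Field K] {W : Type*} [AddCommGroup W] [Module K W]
    (S : Set W) : ℕ :=
  Module.finrank K (Submodule.span K S)

/-- A matroid is representable over a field `K` if independence coincides with
`K`-linear independence of an assignment of vectors to the elements. -/
def RepOver (K : Type*) [Field K] {α : Type*} (M : Matroid α) : Prop :=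
  ∃ (ι : Type) (f : α → ι → K), ∀ I : Set α,
    M.Indep I ↔ I ⊆ M.E ∧ LinearIndependent K (fun x : I => f (x : α))

/-- The `k`-prefix of an ordered matroid on `Fin m`: its restriction to the
first `k` elements, viewed as a matroid on `Fin k`. -/
def prefixMatroid {k m : ℕ} (h : k ≤ m) (M : Matroid (Fin m)) : Matroid (Fin k) :=
  M.comap (Fin.castLE h)

section MRank
variable {α β : Type*} {M : Matroid α} {S I X : Set α}

lemma le_mRank (h : M.Indep I) (hIS : I ⊆ S) : I.encard ≤ mRank M S := by
  refine le_trans ?_ (le_iSup₂ (f := fun I (_ : I ∈ {I | M.Indep I ∧ I ⊆ S}) => I.encard) I ⟨h, hIS⟩)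
  exact le_rfl

lemma mRank_le {c : ℕ∞} (h : ∀ I, M.Indep I → I ⊆ S → I.encard ≤ c) : mRank M S ≤ c :=
  iSup₂_le fun I hI => h I hI.1 hI.2

lemma Matroid.Basis'.mRank_eq (hI : M.IsBasis' I X) : mRank M X = I.encard := by
  refine le_antisymm (mRank_le fun J hJ hJX => ?_) (le_mRank hI.indep hI.subset)
  obtain ⟨J', hJ', hJJ'⟩ := hJ.subset_isBasis'_of_subset hJX
  exact (Set.encard_mono hJJ').trans (hJ'.encard_eq_encard hI).le

lemma mRank_indep_eq (hI : M.Indep I) : mRank M I = I.encard :=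
  Matroid.Basis'.mRank_eq hI.isBasis_self.isBasis'

lemma mRank_comap (f : β → α) (hf : Function.Injective f) (M : Matroid α) (S : Set β) :
    mRank (M.comap f) S = mRank M (f '' S) := by
  apply le_antisymm
  · refine mRank_le fun I hI hIS => ?_
    rw [Matroid.comap_indep_iff] at hI
    have := le_mRank hI.1 (image_mono (f := f) hIS)
    rwa [(hf.injOn).encard_image] at this
  · refine mRank_le fun J hJ hJS => ?_
    have hJ' : (M.comap f).Indep (f ⁻¹' J ∩ S) := by
      rw [Matroid.comap_indep_iff]
      refine ⟨hJ.subset ?_, hf.injOn⟩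
      exact (image_mono (f := f) inter_subset_left).trans (image_preimage_subset f J)
    have himg : f '' (f ⁻¹' J ∩ S) = J := by
      apply Set.Subset.antisymm
      · exact (image_mono (f := f) inter_subset_left).trans (image_preimage_subset f J)
      · intro y hy
        obtain ⟨x, hxS, rfl⟩ := hJS hy
        exact ⟨x, ⟨hy, hxS⟩, rfl⟩
    have := le_mRank hJ' inter_subset_right
    have h2 := (hf.injOn).encard_image (s := f ⁻¹' J ∩ S)
    rw [himg] at h2
    rw [h2]; exact this
end MRank

section SpanRank
open Submodule
variable {K : Type*} [Field K] {W W₂ : Type*} [AddCommGroup W] [Module K W]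
  [AddCommGroup W₂] [Module K W₂]

lemma spanRank_mono {S T : Set W} (h : S ⊆ T) (hT : T.Finite) : spanRank K S ≤ spanRank K T := by
  haveI := FiniteDimensional.span_of_finite K hT
  exact Submodule.finrank_mono (span_mono h)

lemma mem_span_iff_spanRank_insert {S : Set W} (hS : S.Finite) {y : W} :
    y ∈ span K S ↔ spanRank K (insert y S) = spanRank K S := by
  constructor
  · intro hy
    unfold _root_.spanRank
    rw [Submodule.span_insert_eq_span hy]
  · intro hr
    by_contra hy
    haveI := FiniteDimensional.span_of_finite K (hS.insert y)
    have hlt : span K S < span K (insert y S) := by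
      refine lt_of_le_of_ne (span_mono (subset_insert y S)) fun he => hy ?_
      rw [he]
      exact subset_span (mem_insert y S)
    exact absurd hr (Submodule.finrank_lt_finrank_of_lt hlt).ne'

lemma spanRank_image_of_injective (ψ : W →ₗ[K] W₂) (hψ : Function.Injective ψ) (S : Set W) :
    spanRank K (ψ '' S) = spanRank K S := by
  unfold _root_.spanRank
  rw [← Submodule.map_span]
  exact (LinearEquiv.finrank_eq (Submodule.equivMapOfInjective ψ hψ (Submodule.span K S))).symm

lemma spanRank_image_equiv (A : W ≃ₗ[K] W₂) (S : Set W) :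
    spanRank K (A '' S) = spanRank K S :=
  spanRank_image_of_injective A.toLinearMap A.injective S

lemma encard_eq_card {α : Type*} (s : Set α) [Fintype ↥s] :
    s.encard = (Fintype.card ↥s : ℕ∞) := by
  rw [Set.encard_eq_coe_toFinset_card, Set.toFinset_card]

lemma rep_spanRank {m : ℕ} {M : Matroid (Fin m)} (hE : M.E = univ) {ι : Type}
    (f : Fin m → ι → K)
    (hf : ∀ I : Set (Fin m), M.Indep I ↔ I ⊆ M.E ∧ LinearIndependent K (fun x : I => f x))
    (S : Set (Fin m)) : (spanRank K (f '' S) : ℕ∞) = mRank M S := by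
  have hSfin : S.Finite := S.toFinite
  apply le_antisymm
  · obtain ⟨s, hs_sub, hspan, hli⟩ := exists_linearIndependent K (f '' S)
    have hsfin : s.Finite := (hSfin.image f).subset hs_sub
    haveI : Fintype ↥s := hsfin.fintype
    have hsr : spanRank K (f '' S) = Fintype.card ↥s := by
      unfold _root_.spanRank
      rw [← hspan]
      rw [finrank_span_set_eq_card hli, Set.toFinset_card]
    have hch : ∀ v : ↥s, ∃ x, x ∈ S ∧ f x = ↑v := fun v => by
      obtain ⟨x, hx, hfx⟩ := hs_sub v.2
      exact ⟨x, hx, hfx⟩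
    choose e he1 he2 using hch
    set I : Set (Fin m) := Set.range e with hI
    have hIS : I ⊆ S := by rintro x ⟨v, rfl⟩; exact he1 v
    have hfI : f '' I = s := by
      ext w
      constructor
      · rintro ⟨x, ⟨v, rfl⟩, rfl⟩
        rw [he2 v]; exact v.2
      · intro hw
        exact ⟨e ⟨w, hw⟩, ⟨⟨w, hw⟩, rfl⟩, he2 _⟩
    have heinj : Function.Injective e := by
      intro v w hvw
      have := (he2 v).symm.trans (congrArg f hvw) |>.trans (he2 w)
      exact Subtype.ext this
    have hIli : LinearIndependent K (fun x : I => f x) := by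
      set σ : ↥I → ↥s := fun x => (Equiv.ofInjective e heinj).symm ⟨↑x, x.2⟩ with hσ
      have hinj : Function.Injective σ := by
        intro a b hab
        have h := congrArg (Equiv.ofInjective e heinj) hab
        rw [Equiv.apply_symm_apply, Equiv.apply_symm_apply] at h
        exact Subtype.ext (congrArg Subtype.val h)
      have key : ∀ x : I, f ↑x = ↑(σ x) := by
        intro x
        have h1 : e (σ x) = ↑x := by
          have h := (Equiv.ofInjective e heinj).apply_symm_apply ⟨↑x, x.2⟩
          exact congrArg Subtype.val h
        rw [← h1, he2]
      rw [show (fun x : I => f (x : Fin m)) = ((↑) : s → (ι → K)) ∘ σ from funext key]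
      exact hli.comp σ hinj
    have hIndep : M.Indep I := (hf I).mpr ⟨by rw [hE]; exact subset_univ _, hIli⟩
    have hIcard : I.encard = (Fintype.card ↥s : ℕ∞) := by
      have hfinj : Set.InjOn f I := by
        rintro x ⟨v, rfl⟩ y ⟨w, rfl⟩ hxy
        rw [he2 v, he2 w] at hxy
        rw [Subtype.ext hxy]
      rw [← hfinj.encard_image, hfI]
      exact encard_eq_card s
    rw [hsr]
    rw [← hIcard]
    exact le_mRank hIndep hIS
  · refine mRank_le fun I hI hIS => ?_
    rw [hf] at hI
    have hIfin : I.Finite := I.toFinite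
    haveI : Fintype ↥I := hIfin.fintype
    have h1 : I.encard = (Fintype.card ↥I : ℕ∞) := encard_eq_card I
    have h2 : Fintype.card ↥I = spanRank K (f '' I) := by
      unfold _root_.spanRank
      have h := finrank_span_eq_card hI.2
      rw [Set.image_eq_range, ← h]
    have h3 : spanRank K (f '' I) ≤ spanRank K (f '' S) :=
      spanRank_mono (image_mono (f := f) hIS) (hSfin.image f)
    rw [h1, h2]
    exact_mod_cast h3
end SpanRank

section ZMod2
open Submodule
open scoped Classical

lemma zmod2_ne_zero : ∀ a : ZMod 2, a ≠ 0 → a = 1 := by decide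

lemma zmod2_sum_rep {V : Type*} [AddCommGroup V] [Module (ZMod 2) V]
    (s : Finset V) (hs : LinearIndependent (ZMod 2) ((↑) : ↥(↑s : Set V) → V))
    {y : V} (hy : y ∈ span (ZMod 2) (↑s : Set V)) :
    ∑ v ∈ s.filter (fun v => y ∉ span (ZMod 2) ((↑s : Set V) \ {v})), v = y := by
  set t := LinearIndepOn.extend (K := ZMod 2) (v := (id : V → V)) (s := (↑s : Set V)) hs (subset_univ _) with ht
  set b := Module.Basis.extend hs with hb
  have hst : (↑s : Set V) ⊆ t := LinearIndepOn.subset_extend (K := ZMod 2) (v := (id : V → V)) (s := (↑s : Set V)) hs _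
  set c := b.repr y with hc
  have himg : ∀ u : Set V, u ⊆ t → ⇑b '' (((↑) : ↥t → V) ⁻¹' u) = u := by
    intro u hu
    rw [show ⇑b = ((↑) : ↥t → V) from Module.Basis.coe_extend hs, Subtype.image_preimage_coe]
    exact inter_eq_self_of_subset_right hu
  have key : ∀ u : Set V, u ⊆ t → (y ∈ span (ZMod 2) u ↔ ↑c.support ⊆ (((↑) : ↥t → V) ⁻¹' u)) := by
    intro u hu
    have h := b.mem_span_image (m := y) (s := (((↑) : ↥t → V) ⁻¹' u))
    rw [himg u hu] at h
    exact h
  have hsupp : ∀ i ∈ c.support, (i : V) ∈ (↑s : Set V) := fun i hi =>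
    (key _ hst).mp hy (Finset.mem_coe.mpr hi)
  have hset : s.filter (fun v => y ∉ span (ZMod 2) ((↑s : Set V) \ {v}))
      = Finset.image (Subtype.val : ↥t → V) c.support := by
    ext v
    simp only [Finset.mem_filter, Finset.mem_image]
    constructor
    · rintro ⟨hvs, hvnot⟩
      have hvt : v ∈ t := hst hvs
      by_contra hno
      push_neg at hno
      apply hvnot
      refine (key ((↑s : Set V) \ {v}) (diff_subset.trans hst)).mpr ?_
      intro i hi
      have hi' : i ∈ c.support := Finset.mem_coe.mp hi
      exact ⟨hsupp i hi', fun hiv => hno i hi' hiv⟩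
    · rintro ⟨i, hi, rfl⟩
      refine ⟨hsupp i hi, fun hsp => ?_⟩
      have h2 := (key ((↑s : Set V) \ {(i : V)}) (diff_subset.trans hst)).mp hsp
        (Finset.mem_coe.mpr hi)
      exact h2.2 rfl
  rw [hset, Finset.sum_image (fun x _ y _ h => Subtype.ext h)]
  conv_rhs => rw [← b.linearCombination_repr y]
  rw [Finsupp.linearCombination_apply, Finsupp.sum]
  refine Finset.sum_congr rfl fun i hi => ?_
  rw [zmod2_ne_zero _ (Finsupp.mem_support_iff.mp hi), one_smul,
    show ⇑b = ((↑) : ↥t → V) from Module.Basis.coe_extend hs]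
end ZMod2

section RkP
open Submodule
open scoped Classical

abbrev Vn (n : ℕ) : Type := Fin n → ZMod 2

def RkP {m n : ℕ} (M : Matroid (Fin m)) (g : Fin m → Vn n) : Prop :=
  ∀ S : Set (Fin m), (spanRank (ZMod 2) (g '' S) : ℕ∞) = mRank M S

variable {n m k : ℕ}

lemma rkp_basis_linindep {M : Matroid (Fin m)} {g : Fin m → Vn n} (hg : RkP M g)
    {B : Set (Fin m)} (hB : M.Indep B) :
    Set.InjOn g B ∧ LinearIndependent (ZMod 2) ((↑) : ↥(g '' B) → Vn n) := by
  haveI : Fintype ↥B := B.toFinite.fintype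
  have hcard : (spanRank (ZMod 2) (g '' B) : ℕ∞) = (Fintype.card ↥B : ℕ∞) := by
    rw [hg B, mRank_indep_eq hB, encard_eq_card B]
  have hcard' : spanRank (ZMod 2) (g '' B) = Fintype.card ↥B := by exact_mod_cast hcard
  have hli : LinearIndependent (ZMod 2) (fun b : ↥B => g ↑b) := by
    rw [linearIndependent_iff_card_eq_finrank_span]
    rw [← Set.image_eq_range]
    exact hcard'.symm
  refine ⟨fun a ha b hb hab => ?_, ?_⟩
  · have := hli.injective (a₁ := ⟨a, ha⟩) (a₂ := ⟨b, hb⟩) hab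
    exact congrArg Subtype.val this
  · have h2 := hli.linearIndepOn_id
    rwa [← Set.image_eq_range] at h2

lemma rkp_span_univ {M : Matroid (Fin m)} {g : Fin m → Vn n} (hg : RkP M g)
    {B : Set (Fin m)} (hB : M.IsBasis' B univ) :
    span (ZMod 2) (g '' B) = span (ZMod 2) (g '' univ) := by
  haveI : FiniteDimensional (ZMod 2) (span (ZMod 2) (g '' univ)) :=
    FiniteDimensional.span_of_finite _ ((Set.toFinite _).image g)
  refine Submodule.eq_of_le_of_finrank_le (span_mono (image_mono (f := g) (subset_univ B))) ?_
  have h1 : (spanRank (ZMod 2) (g '' univ) : ℕ∞) = (spanRank (ZMod 2) (g '' B) : ℕ∞) := by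
    rw [hg, hg, Matroid.Basis'.mRank_eq hB, mRank_indep_eq hB.indep]
  exact le_of_eq (by exact_mod_cast h1)

lemma rkp_sum_formula {M : Matroid (Fin m)} {g : Fin m → Vn n} (hg : RkP M g)
    {B : Set (Fin m)} (hB : M.IsBasis' B univ) (hBfin : B.Finite) (x : Fin m) :
    g x = ∑ b ∈ hBfin.toFinset.filter
        (fun b => mRank M (insert x (B \ {b})) ≠ mRank M (B \ {b})), g b := by
  obtain ⟨hinj, hli⟩ := rkp_basis_linindep hg hB.indep
  set s : Finset (Vn n) := hBfin.toFinset.image g with hs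
  have hscoe : (↑s : Set (Vn n)) = g '' B := by
    rw [hs, Finset.coe_image, hBfin.coe_toFinset]
  have hli' : LinearIndependent (ZMod 2) ((↑) : ↥(↑s : Set (Vn n)) → Vn n) := by
    rw [hscoe]; exact hli
  have hy : g x ∈ span (ZMod 2) (↑s : Set (Vn n)) := by
    rw [hscoe, rkp_span_univ hg hB]
    exact subset_span ⟨x, mem_univ x, rfl⟩
  have hsum := zmod2_sum_rep s hli' hy
  have himgdiff : ∀ b ∈ B, g '' (B \ {b}) = (g '' B) \ {g b} := by
    intro b hb
    ext v
    constructor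
    · rintro ⟨a, ⟨haB, hab⟩, rfl⟩
      exact ⟨⟨a, haB, rfl⟩, fun hav => hab (by
        rw [Set.mem_singleton_iff] at hav ⊢
        exact hinj haB hb hav)⟩
    · rintro ⟨⟨a, haB, rfl⟩, hne⟩
      exact ⟨a, ⟨haB, fun hab => hne (by
        rw [Set.mem_singleton_iff] at hab ⊢
        rw [hab])⟩, rfl⟩
  have hkey : ∀ b ∈ B, (g x ∉ span (ZMod 2) ((↑s : Set (Vn n)) \ {g b}) ↔
      mRank M (insert x (B \ {b})) ≠ mRank M (B \ {b})) := by
    intro b hb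
    rw [hscoe, ← himgdiff b hb]
    have hmem : g x ∈ span (ZMod 2) (g '' (B \ {b})) ↔
        mRank M (insert x (B \ {b})) = mRank M (B \ {b}) := by
      rw [mem_span_iff_spanRank_insert (((B \ {b}).toFinite).image g)]
      rw [← Set.image_insert_eq]
      constructor
      · intro hsp
        rw [← hg (insert x (B \ {b})), ← hg (B \ {b})]
        exact_mod_cast hsp
      · intro hmr
        have h1 := (hg (insert x (B \ {b}))).trans (hmr.trans (hg (B \ {b})).symm)
        exact_mod_cast h1
    exact not_congr hmem
  have hfilter : s.filter (fun v => g x ∉ span (ZMod 2) ((↑s : Set (Vn n)) \ {v}))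
      = (hBfin.toFinset.filter
        (fun b => mRank M (insert x (B \ {b})) ≠ mRank M (B \ {b}))).image g := by
    ext v
    simp only [Finset.mem_filter, Finset.mem_image, Set.Finite.mem_toFinset, hs]
    constructor
    · rintro ⟨⟨b, hb, rfl⟩, hP⟩
      exact ⟨b, ⟨hb, (hkey b hb).mp hP⟩, rfl⟩
    · rintro ⟨b, ⟨hb, hQ⟩, rfl⟩
      exact ⟨⟨b, hb, rfl⟩, (hkey b hb).mpr hQ⟩
  rw [hfilter] at hsum
  rw [← hsum]
  exact Finset.sum_image (fun a ha b hb hab =>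
    hinj (hBfin.mem_toFinset.mp (Finset.mem_of_mem_filter a ha))
      (hBfin.mem_toFinset.mp (Finset.mem_of_mem_filter b hb)) hab)
end RkP

section EquivLemma
open Submodule
open scoped Classical
variable {n m : ℕ}

lemma rkp_exists_equiv {M : Matroid (Fin m)} {g h : Fin m → Vn n}
    (hg : RkP M g) (hh : RkP M h) :
    ∃ A : Vn n ≃ₗ[ZMod 2] Vn n, ∀ x, A (g x) = h x := by
  obtain ⟨B, hB⟩ := M.exists_isBasis' univ
  have hBfin : B.Finite := B.toFinite
  obtain ⟨hginj, hgli⟩ := rkp_basis_linindep hg hB.indep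
  obtain ⟨hhinj, hhli⟩ := rkp_basis_linindep hh hB.indep
  set t₁ := LinearIndepOn.extend (K := ZMod 2) (v := (id : Vn n → Vn n)) (s := (g '' B)) hgli (subset_univ _) with ht₁
  set t₂ := LinearIndepOn.extend (K := ZMod 2) (v := (id : Vn n → Vn n)) (s := (h '' B)) hhli (subset_univ _) with ht₂
  set b₁ := Module.Basis.extend hgli with hb₁
  set b₂ := Module.Basis.extend hhli with hb₂
  have hs₁ : g '' B ⊆ t₁ := LinearIndepOn.subset_extend (K := ZMod 2) (v := (id : Vn n → Vn n)) (s := (g '' B)) hgli _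
  have hs₂ : h '' B ⊆ t₂ := LinearIndepOn.subset_extend (K := ZMod 2) (v := (id : Vn n → Vn n)) (s := (h '' B)) hhli _
  -- the equiv between the image sets
  set e₀ : ↥(g '' B) ≃ ↥(h '' B) :=
    (Equiv.Set.imageOfInjOn g B hginj).symm.trans (Equiv.Set.imageOfInjOn h B hhinj) with he₀
  have he₀app : ∀ (b : Fin m) (hb : b ∈ B),
      ((e₀ ⟨g b, mem_image_of_mem g hb⟩ : ↥(h '' B)) : Vn n) = h b := by
    intro b hb
    have h1 : (Equiv.Set.imageOfInjOn g B hginj).symm ⟨g b, mem_image_of_mem g hb⟩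
        = ⟨b, hb⟩ := by
      rw [Equiv.symm_apply_eq]
      rfl
    rw [he₀, Equiv.trans_apply, h1]
    rfl
  -- cardinality of the complements
  haveI : Fintype ↥t₁ := Fintype.ofFinite _
  haveI : Fintype ↥t₂ := Fintype.ofFinite _
  have hcard₁ : t₁.ncard = n := by
    rw [Set.ncard_eq_toFinset_card', Set.toFinset_card]
    rw [← Module.finrank_eq_card_basis b₁, Module.finrank_fin_fun]
  have hcard₂ : t₂.ncard = n := by
    rw [Set.ncard_eq_toFinset_card', Set.toFinset_card]
    rw [← Module.finrank_eq_card_basis b₂, Module.finrank_fin_fun]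
  have hcardB₁ : (g '' B).ncard = B.ncard := Set.ncard_image_of_injOn hginj
  have hcardB₂ : (h '' B).ncard = B.ncard := Set.ncard_image_of_injOn hhinj
  have hcarddiff : Nat.card ↥(t₁ \ g '' B) = Nat.card ↥(t₂ \ h '' B) := by
    rw [Nat.card_coe_set_eq, Nat.card_coe_set_eq, Set.ncard_diff hs₁, Set.ncard_diff hs₂,
      hcard₁, hcard₂, hcardB₁, hcardB₂]
  have e₁ : ↥(t₁ \ g '' B) ≃ ↥(t₂ \ h '' B) := (Finite.card_eq.mp hcarddiff).some
  have hdisj₁ : Disjoint (g '' B) (t₁ \ g '' B) := Set.disjoint_sdiff_right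
  have hdisj₂ : Disjoint (h '' B) (t₂ \ h '' B) := Set.disjoint_sdiff_right
  set e : ↥t₁ ≃ ↥t₂ :=
    ((Equiv.setCongr (Set.union_diff_cancel hs₁).symm).trans
      ((Equiv.Set.union hdisj₁).trans
        ((e₀.sumCongr e₁).trans
          ((Equiv.Set.union hdisj₂).symm.trans
            (Equiv.setCongr (Set.union_diff_cancel hs₂)))))) with he
  have heapp : ∀ (b : Fin m) (hb : b ∈ B),
      ((e ⟨g b, hs₁ (mem_image_of_mem g hb)⟩ : ↥t₂) : Vn n) = h b := by
    intro b hb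
    rw [he]
    simp only [Equiv.trans_apply]
    have h1 : (Equiv.setCongr (Set.union_diff_cancel hs₁).symm)
        ⟨g b, hs₁ (mem_image_of_mem g hb)⟩
        = ⟨g b, Or.inl (mem_image_of_mem g hb)⟩ := rfl
    rw [h1]
    rw [Equiv.Set.union_apply_left hdisj₁ (mem_image_of_mem g hb)]
    rw [Equiv.sumCongr_apply, Sum.map_inl]
    rw [Equiv.Set.union_symm_apply_left hdisj₂]
    exact he₀app b hb
  set A : Vn n ≃ₗ[ZMod 2] Vn n := b₁.equiv b₂ e with hA
  have hAB : ∀ (b : Fin m), b ∈ B → A (g b) = h b := by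
    intro b hb
    have h1 : g b = b₁ ⟨g b, hs₁ (mem_image_of_mem g hb)⟩ :=
      (Module.Basis.extend_apply_self hgli ⟨g b, hs₁ (mem_image_of_mem g hb)⟩).symm
    rw [h1, hA, Module.Basis.equiv_apply]
    exact (Module.Basis.extend_apply_self hhli _).trans (heapp b hb)
  refine ⟨A, fun x => ?_⟩
  rw [rkp_sum_formula hg hB hBfin x, rkp_sum_formula hh hB hBfin x, map_sum]
  refine Finset.sum_congr rfl fun b hb => ?_
  exact hAB b (hBfin.mem_toFinset.mp (Finset.mem_of_mem_filter b hb))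
end EquivLemma

section Exists
open Submodule
variable {n m : ℕ}

noncomputable def extZero {r n : ℕ} (h : r ≤ n) : (Fin r → ZMod 2) →ₗ[ZMod 2] Vn n where
  toFun v i := if hi : (i : ℕ) < r then v ⟨i, hi⟩ else 0
  map_add' v w := by funext i; by_cases hi : (i : ℕ) < r <;> simp [hi]
  map_smul' c v := by funext i; by_cases hi : (i : ℕ) < r <;> simp [hi]

lemma extZero_injective {r n : ℕ} (h : r ≤ n) : Function.Injective (extZero h) := by
  intro v w hvw
  funext j
  have := congrFun hvw (Fin.castLE h j)
  simpa [extZero, j.isLt] using this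

lemma rkp_exists {M : Matroid (Fin m)} (hmn : m ≤ n) (hE : M.E = univ)
    (hrep : RepOver (ZMod 2) M) : ∃ g : Fin m → Vn n, RkP M g := by
  obtain ⟨ι, f, hf⟩ := hrep
  set U := span (ZMod 2) (f '' univ) with hU
  haveI : FiniteDimensional (ZMod 2) U :=
    FiniteDimensional.span_of_finite _ ((Set.toFinite _).image f)
  set r := Module.finrank (ZMod 2) U with hr
  have hrank : ∀ S : Set (Fin m), (spanRank (ZMod 2) (f '' S) : ℕ∞) = mRank M S :=
    rep_spanRank hE f hf
  have hrn : r ≤ n := by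
    have h1 : mRank M univ ≤ (m : ℕ∞) := by
      refine mRank_le fun I _ hIS => ?_
      calc I.encard ≤ (univ : Set (Fin m)).encard := Set.encard_mono hIS
        _ = m := by simp [Set.encard_univ]
    have h2 : (spanRank (ZMod 2) (f '' univ) : ℕ∞) ≤ (m : ℕ∞) := (hrank univ).le.trans h1
    have h3 : spanRank (ZMod 2) (f '' univ) ≤ m := by exact_mod_cast h2
    exact le_trans h3 hmn
  set f' : Fin m → U := fun x => ⟨f x, subset_span ⟨x, mem_univ x, rfl⟩⟩ with hf'
  set ψ₀ := (Module.finBasis (ZMod 2) U).equivFun with hψ₀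
  set g : Fin m → Vn n := fun x => extZero hrn (ψ₀ (f' x)) with hg
  refine ⟨g, fun S => ?_⟩
  have h1 : g '' S = extZero hrn '' (ψ₀ '' (f' '' S)) := by
    rw [← Set.image_comp, ← Set.image_comp]
    rfl
  have h2 : spanRank (ZMod 2) (g '' S) = spanRank (ZMod 2) (f' '' S) := by
    rw [h1, spanRank_image_of_injective _ (extZero_injective hrn)]
    have : ψ₀ '' (f' '' S) = ψ₀.toLinearMap '' (f' '' S) := rfl
    rw [this, spanRank_image_of_injective _ ψ₀.injective]
  have h3 : spanRank (ZMod 2) (f' '' S) = spanRank (ZMod 2) (f '' S) := by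
    have : f '' S = U.subtype '' (f' '' S) := by
      rw [← Set.image_comp]; rfl
    rw [this, spanRank_image_of_injective _ (Submodule.injective_subtype U)]
  rw [h2, h3]
  exact hrank S
end Exists

section Glue
open Submodule
variable {n m k : ℕ}

lemma rkp_comp_equiv {M : Matroid (Fin m)} {g : Fin m → Vn n} (hg : RkP M g)
    (A : Vn n ≃ₗ[ZMod 2] Vn n) : RkP M (⇑A ∘ g) := by
  intro S
  rw [Set.image_comp]
  rw [spanRank_image_equiv A (g '' S)]
  exact hg S

lemma rkp_comap {M : Matroid (Fin m)} {g : Fin m → Vn n} (hg : RkP M g)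
    (φ : Fin k → Fin m) (hφ : Function.Injective φ) : RkP (M.comap φ) (g ∘ φ) := by
  intro S
  rw [Set.image_comp, mRank_comap φ hφ M S]
  exact hg (φ '' S)

lemma rkp_perm {M : Matroid (Fin m)} {g : Fin m → Vn n} (σ : Equiv.Perm (Fin m)) :
    RkP (M.comap σ) (g ∘ σ) ↔ RkP M g := by
  constructor
  · intro hgs S
    have h1 := hgs (σ ⁻¹' S)
    rw [mRank_comap σ σ.injective M, Set.image_comp] at h1
    rw [Set.image_preimage_eq S σ.surjective] at h1
    exact h1
  · intro hg
    exact rkp_comap hg σ σ.injective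

lemma repOver_comap {M : Matroid (Fin m)} (hE : M.E = univ) (φ : Fin k → Fin m)
    (hφ : Function.Injective φ) (hrep : RepOver (ZMod 2) M) : RepOver (ZMod 2) (M.comap φ) := by
  obtain ⟨ι, f, hf⟩ := hrep
  refine ⟨ι, f ∘ φ, fun I => ?_⟩
  rw [Matroid.comap_indep_iff, hf (φ '' I)]
  have hg : (M.comap φ).E = univ := by
    rw [Matroid.comap_ground_eq, hE, Set.preimage_univ]
  rw [hg, hE]
  simp only [subset_univ, true_and]
  constructor
  · rintro ⟨hli, -⟩
    set ε : ↥I ≃ ↥(φ '' I) := Equiv.Set.imageOfInjOn φ I hφ.injOn with hε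
    have : (fun x : I => (f ∘ φ) ↑x) = (fun y : ↥(φ '' I) => f ↑y) ∘ ε := rfl
    rw [this]
    exact hli.comp ε ε.injective
  · intro hli
    refine ⟨?_, hφ.injOn⟩
    set ε : ↥I ≃ ↥(φ '' I) := Equiv.Set.imageOfInjOn φ I hφ.injOn with hε
    have heq : (fun y : ↥(φ '' I) => f ↑y) = (fun x : I => (f ∘ φ) ↑x) ∘ ε.symm := by
      funext y
      have : φ ↑(ε.symm y) = ↑y := congrArg Subtype.val (ε.apply_symm_apply y)
      simp only [Function.comp_apply, this]
    rw [heq]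
    exact hli.comp ε.symm ε.symm.injective
end Glue

section Main
open scoped Classical
variable {n m k : ℕ}

noncomputable def RPfin (n m : ℕ) (M : Matroid (Fin m)) : Finset (Fin m → Vn n) :=
  Finset.univ.filter (fun g => RkP M g)

lemma mem_RPfin {M : Matroid (Fin m)} {g : Fin m → Vn n} : g ∈ RPfin n m M ↔ RkP M g := by
  simp [RPfin]

lemma prefix_count (hkm : k ≤ m) {M : Matroid (Fin m)}
    (hM : ∃ g : Fin m → Vn n, RkP M g) {g' : Fin k → Vn n}
    (hg' : RkP (prefixMatroid hkm M) g') :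
    ((RPfin n m M).filter (fun g => g ∘ Fin.castLE hkm = g')).card ≠ 0 ∧
    (RPfin n m M).card = (RPfin n k (prefixMatroid hkm M)).card *
      ((RPfin n m M).filter (fun g => g ∘ Fin.castLE hkm = g')).card := by
  have hres : ∀ g : Fin m → Vn n, RkP M g → RkP (prefixMatroid hkm M) (g ∘ Fin.castLE hkm) :=
    fun g hg => rkp_comap hg _ (Fin.castLE_injective hkm)
  have hcardeq : ∀ g₁' g₂' : Fin k → Vn n, RkP (prefixMatroid hkm M) g₁' →
      RkP (prefixMatroid hkm M) g₂' →
      ((RPfin n m M).filter (fun g => g ∘ Fin.castLE hkm = g₁')).card =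
      ((RPfin n m M).filter (fun g => g ∘ Fin.castLE hkm = g₂')).card := by
    intro g₁' g₂' h1 h2
    obtain ⟨A, hA⟩ := rkp_exists_equiv h1 h2
    have hA' : ∀ x, A.symm (g₂' x) = g₁' x := fun x => by
      rw [← hA x, LinearEquiv.symm_apply_apply]
    refine Finset.card_bij' (fun g _ => ⇑A ∘ g) (fun g _ => ⇑A.symm ∘ g) ?_ ?_ ?_ ?_
    · intro g hg
      rw [Finset.mem_filter, mem_RPfin] at hg ⊢
      refine ⟨rkp_comp_equiv hg.1 A, funext fun x => ?_⟩
      have h3 : g (Fin.castLE hkm x) = g₁' x := congrFun hg.2 x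
      simp only [Function.comp_apply, h3]
      exact hA x
    · intro g hg
      rw [Finset.mem_filter, mem_RPfin] at hg ⊢
      refine ⟨rkp_comp_equiv hg.1 A.symm, funext fun x => ?_⟩
      have h3 : g (Fin.castLE hkm x) = g₂' x := congrFun hg.2 x
      simp only [Function.comp_apply, h3]
      exact hA' x
    · intro g _
      funext x
      simp
    · intro g _
      funext x
      simp
  have hsurj : ∃ g : Fin m → Vn n, RkP M g ∧ g ∘ Fin.castLE hkm = g' := by
    obtain ⟨g₀, hg₀⟩ := hM
    obtain ⟨A, hA⟩ := rkp_exists_equiv (hres g₀ hg₀) hg'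
    refine ⟨⇑A ∘ g₀, rkp_comp_equiv hg₀ A, funext fun x => hA x⟩
  constructor
  · obtain ⟨g, hg1, hg2⟩ := hsurj
    refine Finset.card_ne_zero_of_mem (a := g) ?_
    rw [Finset.mem_filter, mem_RPfin]
    exact ⟨hg1, hg2⟩
  · have hpart : (RPfin n m M).card = ∑ G' ∈ RPfin n k (prefixMatroid hkm M),
        ((RPfin n m M).filter (fun g => g ∘ Fin.castLE hkm = G')).card := by
      refine Finset.card_eq_sum_card_fiberwise fun g hg => ?_
      rw [Finset.mem_coe, mem_RPfin] at hg
      rw [Finset.mem_coe, mem_RPfin]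
      exact hres g hg
    rw [hpart, Finset.sum_congr rfl fun G' hG' => hcardeq G' g' (mem_RPfin.mp hG') hg',
      Finset.sum_const, smul_eq_mul]
end Main

/-- There is an order-independent randomized online matroid morphism from the class of binary
matroids with at most `n` elements into the complete binary matroid of rank `n`.  Each binary
matroid `M` on `Fin m` (`m ≤ n`) is assigned a probability distribution `μ M` on maps
`Fin m → 𝔽₂ⁿ` such that: (i) every map in the support is rank-preserving; (ii) the
pushforward of `μ M` under restriction to a prefix is the distribution assigned to the
prefix; (iii) for every permutation `σ` of `Fin m`, the pushforward of `μ (Mᵒσ)` under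
`f ↦ f ∘ σ⁻¹` equals `μ M`, where `Mᵒσ = M.comap σ` is the matroid in which `S` is
independent iff `σ(S)` is independent in `M`. -/
theorem stmt4 (n : ℕ) :
    ∃ μ : (m : ℕ) → Matroid (Fin m) → ((Fin m → (Fin n → ZMod 2)) → ℝ),
      (∀ m, m ≤ n → ∀ M : Matroid (Fin m), M.E = univ → RepOver (ZMod 2) M →
        ((∀ g, 0 ≤ μ m M g) ∧ (∑ g : Fin m → (Fin n → ZMod 2), μ m M g) = 1 ∧
          (∀ g : Fin m → (Fin n → ZMod 2), 0 < μ m M g →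
            ∀ S : Set (Fin m), (spanRank (ZMod 2) (g '' S) : ℕ∞) = mRank M S))) ∧
      (∀ k m (hkm : k ≤ m), m ≤ n → ∀ M : Matroid (Fin m), M.E = univ →
        RepOver (ZMod 2) M → ∀ g' : Fin k → (Fin n → ZMod 2),
          μ k (prefixMatroid hkm M) g' =
            ∑ g ∈ Finset.univ.filter
              (fun g : Fin m → (Fin n → ZMod 2) => g ∘ Fin.castLE hkm = g'), μ m M g) ∧
      (∀ m, m ≤ n → ∀ M : Matroid (Fin m), M.E = univ → RepOver (ZMod 2) M →
        ∀ σ : Equiv.Perm (Fin m), ∀ g : Fin m → (Fin n → ZMod 2),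
          μ m (M.comap σ) (g ∘ σ) = μ m M g) := by
  classical
  refine ⟨fun m M g => if g ∈ RPfin n m M then ((RPfin n m M).card : ℝ)⁻¹ else 0, ?_, ?_, ?_⟩
  · intro m hmn M hE hrep
    beta_reduce
    have hne : (RPfin n m M).Nonempty := by
      obtain ⟨g, hg⟩ := rkp_exists hmn hE hrep
      exact ⟨g, mem_RPfin.mpr hg⟩
    have hcard0 : ((RPfin n m M).card : ℝ) ≠ 0 := by
      exact_mod_cast Finset.card_ne_zero_of_mem hne.choose_spec
    refine ⟨fun g => ?_, ?_, fun g hg S => ?_⟩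
    · split
      · positivity
      · exact le_rfl
    · rw [Finset.sum_ite_mem, Finset.univ_inter, Finset.sum_const, nsmul_eq_mul,
        mul_inv_cancel₀ hcard0]
    · have hgm : g ∈ RPfin n m M := by
        by_contra hno
        simp only [hno, if_false] at hg
        exact lt_irrefl 0 hg
      exact mem_RPfin.mp hgm S
  · intro k m hkm hmn M hE hrep g'
    beta_reduce
    have hM : ∃ g : Fin m → Vn n, RkP M g := rkp_exists hmn hE hrep
    by_cases hg' : RkP (prefixMatroid hkm M) g'
    · obtain ⟨hF, hcount⟩ := prefix_count hkm hM hg'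
      have hLHS : (if g' ∈ RPfin n k (prefixMatroid hkm M) then
          ((RPfin n k (prefixMatroid hkm M)).card : ℝ)⁻¹ else 0)
          = ((RPfin n k (prefixMatroid hkm M)).card : ℝ)⁻¹ := by
        rw [if_pos (mem_RPfin.mpr hg')]
      rw [hLHS]
      rw [Finset.sum_ite_mem]
      have hinter : Finset.univ.filter
          (fun g : Fin m → Vn n => g ∘ Fin.castLE hkm = g') ∩ RPfin n m M
          = (RPfin n m M).filter (fun g => g ∘ Fin.castLE hkm = g') := by
        ext g
        simp only [Finset.mem_inter, Finset.mem_filter, Finset.mem_univ, true_and, RPfin]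
        exact and_comm
      rw [hinter, Finset.sum_const, nsmul_eq_mul]
      have hM'0 : ((RPfin n k (prefixMatroid hkm M)).card : ℝ) ≠ 0 := by
        have : g' ∈ RPfin n k (prefixMatroid hkm M) := mem_RPfin.mpr hg'
        exact_mod_cast Finset.card_ne_zero_of_mem this
      have hF' : (((RPfin n m M).filter (fun g => g ∘ Fin.castLE hkm = g')).card : ℝ) ≠ 0 := by
        exact_mod_cast hF
      have hcount' : ((RPfin n m M).card : ℝ) = (RPfin n k (prefixMatroid hkm M)).card *
          ((RPfin n m M).filter (fun g => g ∘ Fin.castLE hkm = g')).card := by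
        exact_mod_cast hcount
      rw [hcount']
      field_simp
    · have hLHS : (if g' ∈ RPfin n k (prefixMatroid hkm M) then
          ((RPfin n k (prefixMatroid hkm M)).card : ℝ)⁻¹ else 0) = 0 := by
        rw [if_neg (fun hmem => hg' (mem_RPfin.mp hmem))]
      rw [hLHS]
      symm
      refine Finset.sum_eq_zero fun g hg => ?_
      rw [Finset.mem_filter] at hg
      rw [if_neg]
      intro hmem
      apply hg'
      rw [← hg.2]
      exact rkp_comap (mem_RPfin.mp hmem) _ (Fin.castLE_injective hkm)
  · intro m hmn M hE hrep σ g
    beta_reduce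
    have hcond : (g ∘ ⇑σ ∈ RPfin n m (M.comap ⇑σ)) ↔ (g ∈ RPfin n m M) := by
      rw [mem_RPfin, mem_RPfin]
      exact rkp_perm σ
    have hcard : (RPfin n m (M.comap ⇑σ)).card = (RPfin n m M).card := by
      refine Finset.card_bij' (fun G _ => G ∘ ⇑σ.symm) (fun G _ => G ∘ ⇑σ) ?_ ?_ ?_ ?_
      · intro G hG
        rw [mem_RPfin] at hG ⊢
        have h1 : (G ∘ ⇑σ.symm) ∘ ⇑σ = G := by funext x; simp
        rw [← rkp_perm (M := M) σ, h1]
        exact hG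
      · intro G hG
        rw [mem_RPfin] at hG ⊢
        exact (rkp_perm σ).mpr hG
      · intro G _; funext x; simp
      · intro G _; funext x; simp
    rw [hcard]
    by_cases hmem : g ∈ RPfin n m M
    · rw [if_pos (hcond.mpr hmem), if_pos hmem]
    · rw [if_neg (fun hc => hmem (hcond.mp hc)), if_neg hmem]
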